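/- Let k be a perfect field of characteristic p > 0, S = k[x_1,…,x_n], e ≥ 1, q = p^e, I ⊆ S an ideal with I ≠ S, and z ∈ (I^{[q]} : I). Let φ : F^e_* S → S be the S-linear map φ(F^e_* s) = Φ_S(F^e_*(z·s)), which satisfies φ(F^e_* I) ⊆ I. Then the induced map φ/I : F^e_*(S/I) → S/I is surjective if and only if z ∉ m^{[q]} for every maximal ideal m of S containing I. -/

import Mathlib

/-- The `q`-th Frobenius power `I^{[q]}` of an ideal: the ideal generated by
the `q`-th powers of the elements of `I`. -/
def frobPow {S : Type*} [CommRing S] (q : ℕ) (A : Ideal S) : Ideal S :=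
  Ideal.span ((fun f => f ^ q) '' (A : Set S))

open MvPolynomial

/-- Fedder's Lemma, part (b): for `z ∈ (I^{[q]} : I)`, the map
`φ = Φ_S(z ⬝ –)` is compatible with `I`, and the induced map `φ/I` on `S/I`
is surjective iff `z ∉ m^{[q]}` for every maximal ideal `m ⊇ I`. -/
theorem stmt_14 {k : Type*} [Field k] (p : ℕ) (hp : p.Prime) [CharP k p]
    [PerfectField k]
    (n e : ℕ) (he : 1 ≤ e)
    (Φ : MvPolynomial (Fin n) k → MvPolynomial (Fin n) k)
    (hΦadd : ∀ f g, Φ (f + g) = Φ f + Φ g)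
    (hΦlin : ∀ s f, Φ (s ^ p ^ e * f) = s * Φ f)
    (hΦbasis : ∀ α : Fin n → Fin (p ^ e),
      Φ (∏ i : Fin n, X i ^ (α i : ℕ)) =
        if ∀ i, (α i : ℕ) = p ^ e - 1 then 1 else 0)
    (I : Ideal (MvPolynomial (Fin n) k)) (hI : I ≠ ⊤)
    (z : MvPolynomial (Fin n) k)
    (hz : z ∈ Submodule.colon (frobPow (p ^ e) I) I) :
    (∀ x ∈ I, Φ (z * x) ∈ I) ∧
    (Function.Surjective
        (fun s : MvPolynomial (Fin n) k => Ideal.Quotient.mk I (Φ (z * s))) ↔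
      ∀ m : Ideal (MvPolynomial (Fin n) k),
        m.IsMaximal → I ≤ m → z ∉ frobPow (p ^ e) m) := by
  classical
  haveI : Fact p.Prime := ⟨hp⟩
  have hq1 : 1 < p ^ e := Nat.one_lt_pow (by omega) hp.one_lt
  have hq0 : 0 < p ^ e := by omega
  -- basic facts about Φ
  have h0 : Φ 0 = 0 := by have := hΦadd 0 0; simpa using this.symm
  have hsum : ∀ {ι : Type} (s : Finset ι) (f : ι → MvPolynomial (Fin n) k),
      Φ (∑ i ∈ s, f i) = ∑ i ∈ s, Φ (f i) := by
    intro ι s f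
    induction s using Finset.induction_on with
    | empty => simpa using h0
    | insert _ _ h ih => rw [Finset.sum_insert h, Finset.sum_insert h, hΦadd, ih]
  -- Key lemma A : Φ maps multiples of frobPow q a into a
  have keyA : ∀ (a : Ideal (MvPolynomial (Fin n) k)) (w : MvPolynomial (Fin n) k),
      w ∈ frobPow (p ^ e) a → ∀ s, Φ (s * w) ∈ a := by
    intro a w hw
    refine Submodule.span_induction ?_ ?_ ?_ ?_ hw
    · rintro x ⟨f, hf, rfl⟩ s
      rw [show s * f ^ p ^ e = f ^ p ^ e * s by ring, hΦlin]
      exact Ideal.mul_mem_right _ _ hf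
    · intro s; rw [mul_zero, h0]; exact a.zero_mem
    · intro x y _ _ hx hy s
      rw [mul_add, hΦadd]
      exact a.add_mem (hx s) (hy s)
    · intro t x _ hx s
      rw [smul_eq_mul, show s * (t * x) = (s * t) * x by ring]
      exact hx (s * t)
  -- Φ on monomials with exponents ≤ 2q-2
  have hmono : ∀ d : Fin n → ℕ, (∀ i, d i ≤ 2 * p ^ e - 2) →
      Φ (∏ i, X i ^ d i) = if ∀ i, d i = p ^ e - 1 then 1 else 0 := by
    intro d hd
    by_cases hbig : ∃ i, p ^ e ≤ d i
    · have key : (∏ i, X i ^ d i : MvPolynomial (Fin n) k)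
          = (∏ i, X i ^ (if p ^ e ≤ d i then 1 else 0)) ^ (p ^ e)
            * ∏ i, X i ^ (d i - (if p ^ e ≤ d i then p ^ e else 0)) := by
        rw [← Finset.prod_pow, ← Finset.prod_mul_distrib]
        refine Finset.prod_congr rfl fun i _ => ?_
        rw [← pow_mul, ← pow_add]
        congr 1
        have := hd i
        split <;> omega
      have hlt : ∀ i, d i - (if p ^ e ≤ d i then p ^ e else 0) < p ^ e := by
        intro i; have := hd i; split <;> omega
      rw [key, hΦlin]
      have hb := hΦbasis (fun i => ⟨d i - (if p ^ e ≤ d i then p ^ e else 0), hlt i⟩)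
      simp only [Fin.val_mk] at hb
      rw [hb, if_neg, mul_zero, if_neg]
      · obtain ⟨i, hi⟩ := hbig
        intro hall; have h1 := hall i; omega
      · obtain ⟨i, hi⟩ := hbig
        intro hall; have h1 := hall i
        rw [if_pos hi] at h1
        have h2 := hd i; omega
    · push_neg at hbig
      have hb := hΦbasis (fun i => ⟨d i, hbig i⟩)
      simpa using hb
  -- decomposition of any polynomial in the Frobenius basis
  have hdecomp : ∀ w : MvPolynomial (Fin n) k,
      ∃ c : (Fin n → Fin (p ^ e)) → MvPolynomial (Fin n) k,
      w = ∑ α : Fin n → Fin (p ^ e), c α ^ p ^ e * ∏ i, X i ^ (α i : ℕ) := by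
    intro w
    have root : ∀ a : k, ∃ b : k, b ^ p ^ e = a := fun a =>
      ⟨(iterateFrobeniusEquiv k p e).symm a, by
        have := (iterateFrobeniusEquiv k p e).apply_symm_apply a
        rwa [iterateFrobeniusEquiv_def] at this⟩
    choose ρ hρ using root
    set dmod : (Fin n →₀ ℕ) → (Fin n → Fin (p ^ e)) :=
      fun d i => ⟨d i % p ^ e, Nat.mod_lt _ hq0⟩ with hdmod
    refine ⟨fun α => ∑ d ∈ w.support.filter (fun d => dmod d = α),
      C (ρ (coeff d w)) * ∏ i, X i ^ (d i / p ^ e), ?_⟩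
    have expand : ∀ α : Fin n → Fin (p ^ e),
        (∑ d ∈ w.support.filter (fun d => dmod d = α),
            C (ρ (coeff d w)) * ∏ i, X i ^ (d i / p ^ e)) ^ p ^ e
          * ∏ i, X i ^ (α i : ℕ)
        = ∑ d ∈ w.support.filter (fun d => dmod d = α),
            C (coeff d w) * ∏ i, X i ^ (d i : ℕ) := by
      intro α
      rw [sum_pow_char_pow, Finset.sum_mul]
      refine Finset.sum_congr rfl fun d hd => ?_
      have hα : dmod d = α := (Finset.mem_filter.mp hd).2
      rw [mul_pow, ← map_pow, hρ, ← Finset.prod_pow, mul_assoc, ← Finset.prod_mul_distrib]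
      congr 1
      refine Finset.prod_congr rfl fun i _ => ?_
      rw [← pow_mul, ← pow_add]
      congr 1
      have h1 : (α i : ℕ) = d i % p ^ e := by rw [← hα]
      rw [h1, mul_comm]
      exact Nat.div_add_mod (d i) (p ^ e)
    calc w = ∑ d ∈ w.support, C (coeff d w) * ∏ i, X i ^ (d i : ℕ) := by
            conv_lhs => rw [w.as_sum]
            exact Finset.sum_congr rfl fun d _ => by rw [monomial_eq, Finsupp.prod_pow]
      _ = ∑ α : Fin n → Fin (p ^ e), ∑ d ∈ w.support.filter (fun d => dmod d = α),
            C (coeff d w) * ∏ i, X i ^ (d i : ℕ) :=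
            (Finset.sum_fiberwise w.support dmod _).symm
      _ = _ := by
            exact Finset.sum_congr rfl fun α _ => (expand α).symm
  -- Φ computes the coefficients of such a decomposition
  have hcoef : ∀ (w : MvPolynomial (Fin n) k)
      (c : (Fin n → Fin (p ^ e)) → MvPolynomial (Fin n) k),
      w = ∑ α : Fin n → Fin (p ^ e), c α ^ p ^ e * ∏ i, X i ^ (α i : ℕ) →
      ∀ β : Fin n → Fin (p ^ e),
        Φ (w * ∏ i, X i ^ (p ^ e - 1 - (β i : ℕ))) = c β := by
    intro w c hc β
    rw [hc, Finset.sum_mul, hsum]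
    have hterm : ∀ α : Fin n → Fin (p ^ e),
        Φ ((c α ^ p ^ e * ∏ i, X i ^ (α i : ℕ)) * ∏ i, X i ^ (p ^ e - 1 - (β i : ℕ)))
        = if α = β then c α else 0 := by
      intro α
      rw [mul_assoc, hΦlin, ← Finset.prod_mul_distrib]
      have hexp : (∏ i, (X i ^ (α i : ℕ) * X i ^ (p ^ e - 1 - (β i : ℕ))) :
          MvPolynomial (Fin n) k)
          = ∏ i, X i ^ ((α i : ℕ) + (p ^ e - 1 - (β i : ℕ))) :=
        Finset.prod_congr rfl fun i _ => by rw [← pow_add]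
      have hbound : ∀ i, (α i : ℕ) + (p ^ e - 1 - (β i : ℕ)) ≤ 2 * p ^ e - 2 := by
        intro i; have := (α i).isLt; have := (β i).isLt; omega
      rw [hexp, hmono _ hbound]
      by_cases hαβ : α = β
      · subst hαβ
        rw [if_pos, if_pos rfl, mul_one]
        intro i; have := (α i).isLt; omega
      · rw [if_neg, if_neg hαβ, mul_zero]
        intro hall
        apply hαβ
        funext i
        have h1 := hall i
        have := (α i).isLt; have := (β i).isLt
        exact Fin.ext (by omega)
    rw [Finset.sum_congr rfl fun α _ => hterm α, Finset.sum_ite_eq' Finset.univ β c,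
      if_pos (Finset.mem_univ β)]
  -- Part 1
  have part1 : ∀ x ∈ I, Φ (z * x) ∈ I := by
    intro x hx
    have hzx : z * x ∈ frobPow (p ^ e) I := by
      have := Submodule.mem_colon.mp hz x hx
      rwa [smul_eq_mul] at this
    have := keyA I (z * x) hzx 1
    rwa [one_mul] at this
  refine ⟨part1, ?_, ?_⟩
  · -- surjective → z ∉ m^{[q]}
    intro hsurj m hm hIm hzm
    obtain ⟨s, hs⟩ := hsurj (Ideal.Quotient.mk I 1)
    have h1 : Φ (z * s) - 1 ∈ I := Ideal.Quotient.eq.mp hs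
    have h2 : Φ (z * s) ∈ m := by
      have := keyA m z hzm s
      rwa [mul_comm] at this
    have h3 : (1 : MvPolynomial (Fin n) k) ∈ m := by
      have := m.sub_mem h2 (hIm h1)
      simpa using this
    exact hm.ne_top ((Ideal.eq_top_iff_one m).mpr h3)
  · -- z ∉ m^{[q]} for all m → surjective
    intro hmax
    let J : Ideal (MvPolynomial (Fin n) k) :=
      { carrier := Set.range fun s => Φ (z * s)
        add_mem' := by
          rintro x y ⟨s, hs⟩ ⟨t, ht⟩
          exact ⟨s + t, by show Φ (z * (s + t)) = x + y; rw [mul_add, hΦadd, show Φ (z * s) = x from hs, show Φ (z * t) = y from ht]⟩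
        zero_mem' := ⟨0, by show Φ (z * 0) = 0; rw [mul_zero, h0]⟩
        smul_mem' := by
          rintro t x ⟨s, hs⟩
          refine ⟨t ^ p ^ e * s, ?_⟩
          show Φ (z * (t ^ p ^ e * s)) = t • x
          rw [show z * (t ^ p ^ e * s) = t ^ p ^ e * (z * s) by ring, hΦlin, show Φ (z * s) = x from hs, smul_eq_mul] }
    have memJ : ∀ x, x ∈ J ↔ ∃ s, Φ (z * s) = x := fun x => Iff.rfl
    have hJI : J ⊔ I = ⊤ := by
      by_contra hne
      obtain ⟨m, hm, hle⟩ := Ideal.exists_le_maximal _ hne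
      have hIm : I ≤ m := le_trans le_sup_right hle
      have hJm : J ≤ m := le_trans le_sup_left hle
      refine hmax m hm hIm ?_
      obtain ⟨c, hc⟩ := hdecomp z
      rw [hc]
      refine Ideal.sum_mem _ fun α _ => Ideal.mul_mem_right _ _ ?_
      have hcm : c α ∈ m := hJm ((memJ (c α)).mpr ⟨_, hcoef z c hc α⟩)
      exact Ideal.subset_span ⟨c α, hcm, rfl⟩
    intro w
    obtain ⟨y, rfl⟩ := Ideal.Quotient.mk_surjective w
    have h1 : (1 : MvPolynomial (Fin n) k) ∈ J ⊔ I := by rw [hJI]; trivial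
    obtain ⟨a, haJ, b, hbI, hab⟩ := Submodule.mem_sup.mp h1
    obtain ⟨s, hs⟩ := (memJ a).mp haJ
    refine ⟨y ^ p ^ e * s, ?_⟩
    show Ideal.Quotient.mk I (Φ (z * (y ^ p ^ e * s))) = Ideal.Quotient.mk I y
    rw [show z * (y ^ p ^ e * s) = y ^ p ^ e * (z * s) by ring, hΦlin, hs]
    rw [Ideal.Quotient.eq]
    have : y * a - y = -(y * b) := by
      have : a = 1 - b := by rw [← hab]; ring
      rw [this]; ring
    rw [this]
    exact I.neg_mem (I.mul_mem_left y hbI)
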